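/- Let E1 and E2 be equivalence relations on V and suppose (E1, E2) is the unique LL-solution of the operator F = l_{E2} ∘ l_{E1}. Then |POS_{E1}(E2)| is at most the number of equivalence classes of E2, and |POS_{E2}(E1)| is at most the number of equivalence classes of E1. -/
import Mathlib


variable {V : Type*}

/-- The lower approximation of `X` w.r.t. the equivalence relation `E`:
all points whose `E`-class is contained in `X`. -/
def lowerApprox (E : Setoid V) (X : Set V) : Set V := {x | {y | E.r x y} ⊆ X}

/-- The upper approximation of `X` w.r.t. the equivalence relation `E`:
all points whose `E`-class meets `X`. -/
def upperApprox (E : Setoid V) (X : Set V) : Set V := {x | ({y | E.r x y} ∩ X).Nonempty}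

/-- The positive region of `D` with respect to `C`: the union over the
`D`-equivalence classes of their `C`-lower approximations. -/
def posRegion (C D : Setoid V) : Set V := ⋃ x : V, lowerApprox C {y | D.r x y}

/-- `(E1, E2)` is an LL-solution of `F` if `F X = l_{E2}(l_{E1}(X))` for all `X`. -/
def IsLLSolution (E1 E2 : Setoid V) (F : Set V → Set V) : Prop :=
  ∀ X : Set V, F X = lowerApprox E2 (lowerApprox E1 X)

/-- `(E1, E2)` is the unique LL-solution of `F`. -/
def IsUniqueLLSolution (E1 E2 : Setoid V) (F : Set V → Set V) : Prop :=
  IsLLSolution E1 E2 F ∧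
    ∀ E3 E4 : Setoid V, IsLLSolution E3 E4 F → E3 = E1 ∧ E4 = E2

/-- `(E1, E2)` is a UU-solution of `F` if `F X = u_{E2}(u_{E1}(X))` for all `X`. -/
def IsUUSolution (E1 E2 : Setoid V) (F : Set V → Set V) : Prop :=
  ∀ X : Set V, F X = upperApprox E2 (upperApprox E1 X)

/-- `(E1, E2)` is the unique UU-solution of `F`. -/
def IsUniqueUUSolution (E1 E2 : Setoid V) (F : Set V → Set V) : Prop :=
  IsUUSolution E1 E2 F ∧
    ∀ E3 E4 : Setoid V, IsUUSolution E3 E4 F → E3 = E1 ∧ E4 = E2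

/-- `(E1, E2)` is a UL-solution of `F` if `F X = u_{E2}(l_{E1}(X))` for all `X`. -/
def IsULSolution (E1 E2 : Setoid V) (F : Set V → Set V) : Prop :=
  ∀ X : Set V, F X = upperApprox E2 (lowerApprox E1 X)

/-- `(E1, E2)` is the unique UL-solution of `F`. -/
def IsUniqueULSolution (E1 E2 : Setoid V) (F : Set V → Set V) : Prop :=
  IsULSolution E1 E2 F ∧
    ∀ E3 E4 : Setoid V, IsULSolution E3 E4 F → E3 = E1 ∧ E4 = E2

/-- `(E1, E2)` is an LU-solution of `F` if `F X = l_{E2}(u_{E1}(X))` for all `X`. -/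
def IsLUSolution (E1 E2 : Setoid V) (F : Set V → Set V) : Prop :=
  ∀ X : Set V, F X = lowerApprox E2 (upperApprox E1 X)

/-- `(E1, E2)` is the unique LU-solution of `F`. -/
def IsUniqueLUSolution (E1 E2 : Setoid V) (F : Set V → Set V) : Prop :=
  IsLUSolution E1 E2 F ∧
    ∀ E3 E4 : Setoid V, IsLUSolution E3 E4 F → E3 = E1 ∧ E4 = E2

/-! ### Auxiliary machinery -/

lemma mem_ll {E F : Setoid V} {X : Set V} {z : V} :
    z ∈ lowerApprox F (lowerApprox E X) ↔ ∀ w, F.r z w → ∀ a, E.r w a → a ∈ X := by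
  constructor
  · intro hz w hw a ha
    exact hz hw ha
  · intro hz w hw a ha
    exact hz w hw a ha

lemma mem_posRegion {C D : Setoid V} {x : V} :
    x ∈ posRegion C D ↔ ∀ a, C.r x a → D.r x a := by
  simp only [posRegion, Set.mem_iUnion]
  constructor
  · rintro ⟨w, hw⟩ a ha
    have hwx : D.r w x := hw (C.refl x)
    exact D.trans (D.symm hwx) (hw ha)
  · intro hx
    exact ⟨x, fun a ha => hx a ha⟩

/-- The equivalence relation obtained from `E` by merging the classes of `x` and `y`. -/
def mergeRel (E : Setoid V) (x y : V) : V → V → Prop :=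
  fun a b => E.r a b ∨ (E.r a x ∨ E.r a y) ∧ (E.r b x ∨ E.r b y)

lemma mergeEquiv (E : Setoid V) (x y : V) : Equivalence (mergeRel E x y) := by
  constructor
  · intro a; exact Or.inl (E.refl a)
  · rintro a b (hab | ⟨ha, hb⟩)
    · exact Or.inl (E.symm hab)
    · exact Or.inr ⟨hb, ha⟩
  · rintro a b c (hab | ⟨ha, hb⟩) (hbc | ⟨hb', hc⟩)
    · exact Or.inl (E.trans hab hbc)
    · refine Or.inr ⟨?_, hc⟩
      rcases hb' with hb' | hb'
      · exact Or.inl (E.trans hab hb')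
      · exact Or.inr (E.trans hab hb')
    · refine Or.inr ⟨ha, ?_⟩
      rcases hb with hb | hb
      · exact Or.inl (E.trans (E.symm hbc) hb)
      · exact Or.inr (E.trans (E.symm hbc) hb)
    · exact Or.inr ⟨ha, hc⟩

/-- The equivalence relation obtained from `E` by splitting `{x}` off from its class. -/
def splitRel (E : Setoid V) (x : V) : V → V → Prop :=
  fun a b => (a = x ∧ b = x) ∨ (E.r a b ∧ a ≠ x ∧ b ≠ x)

lemma splitEquiv (E : Setoid V) (x : V) : Equivalence (splitRel E x) := by
  constructor
  · intro a
    by_cases hax : a = x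
    · exact Or.inl ⟨hax, hax⟩
    · exact Or.inr ⟨E.refl a, hax, hax⟩
  · rintro a b (⟨h1, h2⟩ | ⟨h1, h2, h3⟩)
    · exact Or.inl ⟨h2, h1⟩
    · exact Or.inr ⟨E.symm h1, h3, h2⟩
  · rintro a b c (⟨h1, h2⟩ | ⟨h1, h2, h3⟩) (⟨h4, h5⟩ | ⟨h4, h5, h6⟩)
    · exact Or.inl ⟨h1, h5⟩
    · exact absurd h2 h5
    · exact absurd h4 h3
    · exact Or.inr ⟨E.trans h1 h4, h2, h6⟩

def mergeSetoid (E : Setoid V) (x y : V) : Setoid V := ⟨mergeRel E x y, mergeEquiv E x y⟩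

def splitSetoid (E : Setoid V) (x : V) : Setoid V := ⟨splitRel E x, splitEquiv E x⟩

lemma mergeSetoid_r {E : Setoid V} {x y a b : V} :
    (mergeSetoid E x y).r a b ↔ mergeRel E x y a b := Iff.rfl

lemma splitSetoid_r {E : Setoid V} {x a b : V} :
    (splitSetoid E x).r a b ↔ splitRel E x a b := Iff.rfl

/-- Each `E2`-class contains at most one point of the positive region `POS_{E1}(E2)`. -/
lemma inner_inj (E1 E2 : Setoid V)
    (h : IsUniqueLLSolution E1 E2 (fun X => lowerApprox E2 (lowerApprox E1 X)))
    {x y : V} (hx : x ∈ posRegion E1 E2) (hy : y ∈ posRegion E1 E2)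
    (hxy : E2.r x y) : x = y := by
  by_contra hne
  rw [mem_posRegion] at hx hy
  by_cases hr : E1.r x y
  · -- split the `E1`-class of `x`
    have hsol : IsLLSolution (splitSetoid E1 x) E2
        (fun X => lowerApprox E2 (lowerApprox E1 X)) := by
      intro X
      show lowerApprox E2 (lowerApprox E1 X)
          = lowerApprox E2 (lowerApprox (splitSetoid E1 x) X)
      ext z
      rw [mem_ll, mem_ll]
      constructor
      · -- easy direction: the split relation is finer than `E1`
        intro hz w hw a ha
        rcases ha with ⟨hwx, hax⟩ | ⟨hwa, -, -⟩
        · have hwa : E1.r w a := by rw [hwx, hax]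
          exact hz w hw a hwa
        · exact hz w hw a hwa
      · -- hard direction
        intro hz w hw a ha
        by_cases hax : a = x
        · have haw : E1.r w x := hax ▸ ha
          have h1 : E2.r x w := hx w (E1.symm haw)
          have h2 : E2.r z x := E2.trans hw (E2.symm h1)
          have : (x : V) ∈ X := hz x h2 x (Or.inl ⟨rfl, rfl⟩)
          rwa [hax]
        · by_cases hwx : w = x
          · have haw : E1.r x a := hwx ▸ ha
            have h1 : E1.r y a := E1.trans (E1.symm hr) haw
            have h2 : E2.r z y := E2.trans (hwx ▸ hw) hxy
            exact hz y h2 a (Or.inr ⟨h1, fun hh => hne hh.symm, hax⟩)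
          · exact hz w hw a (Or.inr ⟨ha, hwx, hax⟩)
    have heq : splitSetoid E1 x = E1 := (h.2 (splitSetoid E1 x) E2 hsol).1
    have hcon : (splitSetoid E1 x).r x y := by rw [heq]; exact hr
    rcases hcon with ⟨-, h2⟩ | ⟨-, h2, -⟩
    · exact hne h2.symm
    · exact h2 rfl
  · -- merge the `E1`-classes of `x` and `y`
    have hsol : IsLLSolution (mergeSetoid E1 x y) E2
        (fun X => lowerApprox E2 (lowerApprox E1 X)) := by
      intro X
      show lowerApprox E2 (lowerApprox E1 X)
          = lowerApprox E2 (lowerApprox (mergeSetoid E1 x y) X)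
      ext z
      rw [mem_ll, mem_ll]
      constructor
      · -- hard direction
        intro hz w hw a ha
        rcases ha with hwa | ⟨hwm, ham⟩
        · exact hz w hw a hwa
        · have hzxy : E2.r z x ∧ E2.r z y := by
            rcases hwm with hwm | hwm
            · have h1 : E2.r x w := hx w (E1.symm hwm)
              have h2 : E2.r z x := E2.trans hw (E2.symm h1)
              exact ⟨h2, E2.trans h2 hxy⟩
            · have h1 : E2.r y w := hy w (E1.symm hwm)
              have h2 : E2.r z y := E2.trans hw (E2.symm h1)
              exact ⟨E2.trans h2 (E2.symm hxy), h2⟩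
          rcases ham with ham | ham
          · exact hz x hzxy.1 a (E1.symm ham)
          · exact hz y hzxy.2 a (E1.symm ham)
      · -- easy direction: `E1` is finer than the merged relation
        intro hz w hw a ha
        exact hz w hw a (Or.inl ha)
    have heq : mergeSetoid E1 x y = E1 := (h.2 (mergeSetoid E1 x y) E2 hsol).1
    have hcon : E1.r x y := by
      rw [← heq]
      exact Or.inr ⟨Or.inl (E1.refl x), Or.inr (E1.refl y)⟩
    exact hr hcon

/-- Each `E1`-class contains at most one point of the positive region `POS_{E2}(E1)`. -/
lemma outer_inj (E1 E2 : Setoid V)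
    (h : IsUniqueLLSolution E1 E2 (fun X => lowerApprox E2 (lowerApprox E1 X)))
    {x y : V} (hx : x ∈ posRegion E2 E1) (hy : y ∈ posRegion E2 E1)
    (hxy : E1.r x y) : x = y := by
  by_contra hne
  rw [mem_posRegion] at hx hy
  by_cases hr : E2.r x y
  · -- split the `E2`-class of `x`
    have hsol : IsLLSolution E1 (splitSetoid E2 x)
        (fun X => lowerApprox E2 (lowerApprox E1 X)) := by
      intro X
      show lowerApprox E2 (lowerApprox E1 X)
          = lowerApprox (splitSetoid E2 x) (lowerApprox E1 X)
      ext z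
      rw [mem_ll, mem_ll]
      constructor
      · -- easy direction: the split relation is finer than `E2`
        intro hz w hw a ha
        rcases hw with ⟨hzx, hwx⟩ | ⟨hzw, -, -⟩
        · have hzw : E2.r z w := by rw [hzx, hwx]
          exact hz w hzw a ha
        · exact hz w hzw a ha
      · -- hard direction
        intro hz w hw a ha
        by_cases hzx : z = x
        · have h1 : E2.r x w := hzx ▸ hw
          have h2 : E1.r x a := E1.trans (hx w h1) ha
          have h3 : E1.r z a := by rw [hzx]; exact h2
          exact hz z (Or.inl ⟨hzx, hzx⟩) a h3
        · by_cases hwx : w = x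
          · have hw' : E2.r z x := hwx ▸ hw
            have h1 : E2.r z y := E2.trans hw' hr
            have h2 : E1.r x a := hwx ▸ ha
            have h3 : E1.r y a := E1.trans (E1.symm hxy) h2
            exact hz y (Or.inr ⟨h1, hzx, fun hh => hne hh.symm⟩) a h3
          · exact hz w (Or.inr ⟨hw, hzx, hwx⟩) a ha
    have heq : splitSetoid E2 x = E2 := (h.2 E1 (splitSetoid E2 x) hsol).2
    have hcon : (splitSetoid E2 x).r x y := by rw [heq]; exact hr
    rcases hcon with ⟨-, h2⟩ | ⟨-, h2, -⟩
    · exact hne h2.symm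
    · exact h2 rfl
  · -- merge the `E2`-classes of `x` and `y`
    have hsol : IsLLSolution E1 (mergeSetoid E2 x y)
        (fun X => lowerApprox E2 (lowerApprox E1 X)) := by
      intro X
      show lowerApprox E2 (lowerApprox E1 X)
          = lowerApprox (mergeSetoid E2 x y) (lowerApprox E1 X)
      ext z
      rw [mem_ll, mem_ll]
      constructor
      · -- hard direction
        intro hz w hw a ha
        rcases hw with hzw | ⟨hzm, hwm⟩
        · exact hz w hzw a ha
        · have hxya : E1.r x a ∧ E1.r y a := by
            rcases hwm with hwm | hwm
            · have h1 : E1.r x w := hx w (E2.symm hwm)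
              have h2 : E1.r x a := E1.trans h1 ha
              exact ⟨h2, E1.trans (E1.symm hxy) h2⟩
            · have h1 : E1.r y w := hy w (E2.symm hwm)
              have h2 : E1.r y a := E1.trans h1 ha
              exact ⟨E1.trans hxy h2, h2⟩
          rcases hzm with hzm | hzm
          · exact hz x hzm a hxya.1
          · exact hz y hzm a hxya.2
      · -- easy direction
        intro hz w hw a ha
        exact hz w (Or.inl hw) a ha
    have heq : mergeSetoid E2 x y = E2 := (h.2 E1 (mergeSetoid E2 x y) hsol).2
    have hcon : E2.r x y := by
      rw [← heq]
      exact Or.inr ⟨Or.inl (E2.refl x), Or.inr (E2.refl y)⟩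
    exact hr hcon

theorem stmt_14 [Fintype V] [Nonempty V] (E1 E2 : Setoid V)
    (h : IsUniqueLLSolution E1 E2 (fun X => lowerApprox E2 (lowerApprox E1 X))) :
    Nat.card (posRegion E1 E2) ≤ Nat.card (Quotient E2) ∧
    Nat.card (posRegion E2 E1) ≤ Nat.card (Quotient E1) := by
  constructor
  · refine Nat.card_le_card_of_injective
      (fun p : posRegion E1 E2 => (Quotient.mk E2 p.1 : Quotient E2)) ?_
    rintro ⟨a, ha⟩ ⟨b, hb⟩ hab
    simpa using inner_inj E1 E2 h ha hb (Quotient.exact hab)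
  · refine Nat.card_le_card_of_injective
      (fun p : posRegion E2 E1 => (Quotient.mk E1 p.1 : Quotient E1)) ?_
    rintro ⟨a, ha⟩ ⟨b, hb⟩ hab
    simpa using outer_inj E1 E2 h ha hb (Quotient.exact hab)
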